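/- For a topological space X, the following are equivalent: (a) X is totally Lindelöf; (b) every ω-closed filter base on X extends to a total ω-closed filter base on X; (c) every δ-stable filter base on X extends to a total δ-stable filter base on X. -/
import Mathlib


open Set Topology

/-- A filter base on `X`: a nonempty family of subsets of `X`, not containing `∅`,
closed under pairwise intersections. -/
def FilterBaseOn (X : Type*) (F : Set (Set X)) : Prop :=
  F.Nonempty ∧ ∅ ∉ F ∧ ∀ A ∈ F, ∀ B ∈ F, A ∩ B ∈ F

/-- `F` converges to the set `W`: every open set containing `W` contains a member of `F`. -/
def ConvergesTo {X : Type*} [TopologicalSpace X] (F : Set (Set X)) (W : Set X) : Prop :=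
  ∀ U : Set X, IsOpen U → W ⊆ U → ∃ A ∈ F, A ⊆ U

/-- `F` is total: every filter base extending `F` has nonempty adherence
(intersection of the closures of all its members). -/
def TotalFB {X : Type*} [TopologicalSpace X] (F : Set (Set X)) : Prop :=
  ∀ H : Set (Set X), FilterBaseOn X H → F ⊆ H → (⋂ A ∈ H, closure A).Nonempty

/-- `F` is stable under countable intersections: every countable subfamily of `F`
has a member of `F` contained in its intersection. -/
def StableCI {X : Type*} (F : Set (Set X)) : Prop :=
  ∀ S ⊆ F, S.Countable → ∃ H ∈ F, H ⊆ ⋂₀ S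

/-- `F` is ω-closed: the intersection of any nonempty countable subfamily of `F` belongs to `F`. -/
def OmegaClosedFB {X : Type*} (F : Set (Set X)) : Prop :=
  ∀ S ⊆ F, S.Countable → S.Nonempty → ⋂₀ S ∈ F

/-- `F` is δ-stable: every nonempty countable subfamily of `F` has nonempty intersection. -/
def DeltaStableFB {X : Type*} (F : Set (Set X)) : Prop :=
  ∀ S ⊆ F, S.Countable → S.Nonempty → (⋂₀ S).Nonempty

/-- `G_δ(K)`: the family of Gδ subsets (countable intersections of open sets) containing `K`. -/
def GdeltaNbhds {X : Type*} [TopologicalSpace X] (K : Set X) : Set (Set X) :=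
  {G | K ⊆ G ∧ IsGδ G}

/-- `F ∨ G = {F₀ ∩ F₁ : F₀, F₁ ∈ F ∪ G}`. -/
def joinFB {X : Type*} (F G : Set (Set X)) : Set (Set X) :=
  {A | ∃ F₀ ∈ F ∪ G, ∃ F₁ ∈ F ∪ G, A = F₀ ∩ F₁}

/-- `X` is totally Lindelöf: every filter base stable under countable intersections
extends to a total filter base stable under countable intersections. -/
def TotallyLindelofSpace (X : Type*) [TopologicalSpace X] : Prop :=
  ∀ F : Set (Set X), FilterBaseOn X F → StableCI F →
    ∃ H : Set (Set X), FilterBaseOn X H ∧ StableCI H ∧ F ⊆ H ∧ TotalFB H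

/-- `X` is Alster: every cover of `X` by Gδ sets such that every compact subset of `X`
is contained in a single member admits a countable subcover. -/
def AlsterSpace (X : Type*) [TopologicalSpace X] : Prop :=
  ∀ 𝒢 : Set (Set X), (∀ G ∈ 𝒢, IsGδ G) → (∀ K : Set X, IsCompact K → ∃ G ∈ 𝒢, K ⊆ G) →
    ∃ 𝒞 ⊆ 𝒢, 𝒞.Countable ∧ ⋃₀ 𝒞 = Set.univ

/-- `D` is a discrete subset: each of its points has an open neighborhood meeting `D`
only in that point. -/
def IsDiscreteSubset {X : Type*} [TopologicalSpace X] (D : Set X) : Prop :=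
  ∀ a ∈ D, ∃ U : Set X, IsOpen U ∧ U ∩ D = {a}

/-- The first uncountable ordinal ω₁. -/
noncomputable def omega1 : Ordinal := (Cardinal.aleph 1).ord

section Aux

variable {X : Type*}

/-- Closure of a family under nonempty countable intersections. -/
def ciClosure (F : Set (Set X)) : Set (Set X) :=
  {A | ∃ S ⊆ F, S.Countable ∧ S.Nonempty ∧ A = ⋂₀ S}

lemma subset_ciClosure (F : Set (Set X)) : F ⊆ ciClosure F := fun A hA =>
  ⟨{A}, by simpa using hA, countable_singleton A, singleton_nonempty A,
    (sInter_singleton A).symm⟩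

lemma stableCI_of_omegaClosed {F : Set (Set X)} (hne : F.Nonempty)
    (hω : OmegaClosedFB F) : StableCI F := by
  intro S hS hSc
  rcases S.eq_empty_or_nonempty with rfl | hSn
  · obtain ⟨B, hB⟩ := hne
    exact ⟨B, hB, by simp⟩
  · exact ⟨⋂₀ S, hω S hS hSc hSn, subset_rfl⟩

lemma deltaStable_of_stableCI {F : Set (Set X)} (hF : FilterBaseOn X F)
    (hS : StableCI F) : DeltaStableFB F := by
  intro S hSF hSc _
  obtain ⟨H, hH, hHsub⟩ := hS S hSF hSc
  rcases H.eq_empty_or_nonempty with rfl | hHn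
  · exact absurd hH hF.2.1
  · exact hHn.mono hHsub

lemma ciClosure_filterBase {F : Set (Set X)} (hF : FilterBaseOn X F)
    (hd : DeltaStableFB F) : FilterBaseOn X (ciClosure F) := by
  refine ⟨hF.1.mono (subset_ciClosure F), ?_, ?_⟩
  · rintro ⟨S, hS, hc, hn, hE⟩
    have := hd S hS hc hn
    rw [← hE] at this
    exact Set.not_nonempty_empty this
  · rintro A ⟨S, hS, hSc, hSn, rfl⟩ B ⟨T, hT, hTc, hTn, rfl⟩
    exact ⟨S ∪ T, union_subset hS hT, hSc.union hTc,
      hSn.mono subset_union_left, (sInter_union S T).symm⟩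

lemma ciClosure_key {F : Set (Set X)} {S : Set (Set X)}
    (hS : S ⊆ ciClosure F) (hSc : S.Countable) (hSn : S.Nonempty) :
    ⋂₀ S ∈ ciClosure F := by
  have h : ∀ A : S, ∃ T ⊆ F, T.Countable ∧ T.Nonempty ∧ (A : Set X) = ⋂₀ T :=
    fun A => hS A.2
  choose T hTF hTc hTn hTE using h
  have : Countable S := hSc.to_subtype
  have hEq : ⋂₀ (⋃ A : S, T A) = ⋂₀ S := by
    rw [sInter_iUnion]
    rw [sInter_eq_iInter]
    exact iInter_congr fun A => (hTE A).symm
  refine ⟨⋃ A : S, T A, iUnion_subset hTF, countable_iUnion hTc, ?_, hEq.symm⟩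
  obtain ⟨A, hA⟩ := hSn
  obtain ⟨B, hB⟩ := hTn ⟨A, hA⟩
  exact ⟨B, mem_iUnion.2 ⟨⟨A, hA⟩, hB⟩⟩

lemma ciClosure_omegaClosed (F : Set (Set X)) : OmegaClosedFB (ciClosure F) :=
  fun _ hS hSc hSn => ciClosure_key hS hSc hSn

lemma ciClosure_stableCI {F : Set (Set X)} (hne : F.Nonempty) :
    StableCI (ciClosure F) :=
  stableCI_of_omegaClosed (hne.mono (subset_ciClosure F)) (ciClosure_omegaClosed F)

lemma ciClosure_total [TopologicalSpace X] {F : Set (Set X)} (h : TotalFB F) :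
    TotalFB (ciClosure F) := fun H hH hsub =>
  h H hH ((subset_ciClosure F).trans hsub)

/-- Upward closure of a family. -/
def upCl (F : Set (Set X)) : Set (Set X) := {A | ∃ B ∈ F, B ⊆ A}

lemma subset_upCl (F : Set (Set X)) : F ⊆ upCl F := fun A hA => ⟨A, hA, subset_rfl⟩

lemma upCl_filterBase {F : Set (Set X)} (hF : FilterBaseOn X F) :
    FilterBaseOn X (upCl F) := by
  refine ⟨hF.1.mono (subset_upCl F), ?_, ?_⟩
  · rintro ⟨B, hB, hBsub⟩
    exact hF.2.1 (by rwa [subset_empty_iff.1 hBsub] at hB)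
  · rintro A ⟨B₁, hB₁, h₁⟩ B ⟨B₂, hB₂, h₂⟩
    exact ⟨B₁ ∩ B₂, hF.2.2 B₁ hB₁ B₂ hB₂, inter_subset_inter h₁ h₂⟩

lemma upCl_omegaClosed {F : Set (Set X)} (hS : StableCI F) :
    OmegaClosedFB (upCl F) := by
  intro S hSF hSc hSn
  have h : ∀ A : S, ∃ B ∈ F, B ⊆ (A : Set X) := fun A => hSF A.2
  choose B hBF hBsub using h
  have : Countable S := hSc.to_subtype
  obtain ⟨H, hH, hHsub⟩ := hS (Set.range B) (range_subset_iff.2 hBF)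
    (countable_range B)
  refine ⟨H, hH, hHsub.trans ?_⟩
  intro x hx A hA
  exact hBsub ⟨A, hA⟩ (hx _ ⟨⟨A, hA⟩, rfl⟩)

end Aux

theorem stmt3 {X : Type*} [TopologicalSpace X] :
    (TotallyLindelofSpace X ↔
      ∀ F : Set (Set X), FilterBaseOn X F → OmegaClosedFB F →
        ∃ H : Set (Set X), FilterBaseOn X H ∧ OmegaClosedFB H ∧ F ⊆ H ∧ TotalFB H) ∧
    (TotallyLindelofSpace X ↔
      ∀ F : Set (Set X), FilterBaseOn X F → DeltaStableFB F →
        ∃ H : Set (Set X), FilterBaseOn X H ∧ DeltaStableFB H ∧ F ⊆ H ∧ TotalFB H) := by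
  constructor
  · constructor
    · -- TL → ω-closed version
      intro hTL F hF hω
      obtain ⟨H, hHfb, hHci, hFH, hHtot⟩ := hTL F hF (stableCI_of_omegaClosed hF.1 hω)
      exact ⟨ciClosure H, ciClosure_filterBase hHfb (deltaStable_of_stableCI hHfb hHci),
        ciClosure_omegaClosed H, hFH.trans (subset_ciClosure H),
        ciClosure_total hHtot⟩
    · -- ω-closed version → TL
      intro h F hF hS
      obtain ⟨H, hHfb, hHω, hFH, hHtot⟩ :=
        h (upCl F) (upCl_filterBase hF) (upCl_omegaClosed hS)
      exact ⟨H, hHfb, stableCI_of_omegaClosed hHfb.1 hHω,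
        (subset_upCl F).trans hFH, hHtot⟩
  · constructor
    · -- TL → δ-stable version
      intro hTL F hF hδ
      obtain ⟨H, hHfb, hHci, hFH, hHtot⟩ :=
        hTL (ciClosure F) (ciClosure_filterBase hF hδ) (ciClosure_stableCI hF.1)
      exact ⟨H, hHfb, deltaStable_of_stableCI hHfb hHci,
        (subset_ciClosure F).trans hFH, hHtot⟩
    · -- δ-stable version → TL
      intro h F hF hS
      obtain ⟨H, hHfb, hHδ, hFH, hHtot⟩ := h F hF (deltaStable_of_stableCI hF hS)
      exact ⟨ciClosure H, ciClosure_filterBase hHfb hHδ, ciClosure_stableCI hHfb.1,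
        hFH.trans (subset_ciClosure H), ciClosure_total hHtot⟩
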